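/- If B ⊊ A is a solvable extension of central arrangements in ℂ^l, then r(B) ≤ r(A) ≤ r(B) + 1, where r denotes the rank of an arrangement. -/

import Mathlib

/-! Common notions for central hyperplane arrangements, given by a family
`f : ι → Module.Dual ℂ V` of defining linear functionals (one per hyperplane). -/

variable {V : Type*} [AddCommGroup V] [Module ℂ V]

/-- The intersection lattice of the subarrangement indexed by the finite set `B`:
all intersections of subfamilies of kernels (the empty intersection being `⊤ = V`). -/
def arrLatticeOn {ι : Type*} (f : ι → Module.Dual ℂ V) (B : Finset ι) :
    Set (Submodule ℂ V) :=
  {X | ∃ S : Finset ι, S ⊆ B ∧ X = S.inf fun i => LinearMap.ker (f i)}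

/-- The rank (codimension) of an element of the intersection lattice. -/
noncomputable def arrCorank (X : Submodule ℂ V) : ℕ :=
  Module.finrank ℂ (V ⧸ X)

/-- The rank of the subarrangement indexed by `B`: the maximal rank occurring in its
intersection lattice. -/
noncomputable def arrRankOn {ι : Type*} (f : ι → Module.Dual ℂ V) (B : Finset ι) : ℕ :=
  sSup (arrCorank '' arrLatticeOn f B)

/-- The intersection lattice of the whole arrangement. -/
def arrLattice {ι : Type*} [Fintype ι] (f : ι → Module.Dual ℂ V) :
    Set (Submodule ℂ V) :=
  arrLatticeOn f Finset.univ

/-- The rank `r(A)` of the arrangement. -/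
noncomputable def arrRank {ι : Type*} [Fintype ι] (f : ι → Module.Dual ℂ V) : ℕ :=
  arrRankOn f Finset.univ

/-- `X` is a modular element of the intersection lattice. -/
def IsModular {ι : Type*} [Fintype ι] (f : ι → Module.Dual ℂ V) (X : Submodule ℂ V) : Prop :=
  X ∈ arrLattice f ∧ ∀ Y ∈ arrLattice f, X ⊔ Y ∈ arrLattice f

/-- A central arrangement is supersolvable if there is a maximal chain
`V = X_0 ⊃ X_1 ⊃ ⋯ ⊃ X_r = center` of modular elements, with `X_i` of rank `i`
and `r = r(A)`. -/
def Supersolvable {ι : Type*} [Fintype ι] (f : ι → Module.Dual ℂ V) : Prop :=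
  ∃ X : ℕ → Submodule ℂ V,
    X 0 = ⊤ ∧
    X (arrRank f) = ⨅ i, LinearMap.ker (f i) ∧
    (∀ i ≤ arrRank f, IsModular f (X i)) ∧
    (∀ i ≤ arrRank f, arrCorank (X i) = i) ∧
    (∀ i j, i ≤ j → j ≤ arrRank f → X j ≤ X i)

/-- The pair of subarrangements `B ⊊ C` is a solvable extension: closure, completion
and solvability conditions on the defining functionals. -/
def IsSolvableExtension {ι : Type*} [DecidableEq ι] (f : ι → Module.Dual ℂ V) (B C : Finset ι) : Prop :=
  B ⊂ C ∧
  -- closure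
  (∀ α ∈ B, ∀ β ∈ B, α ≠ β → ∀ a ∈ C \ B, LinearIndependent ℂ ![f α, f β, f a]) ∧
  -- completion
  (∀ a ∈ C \ B, ∀ b ∈ C \ B, a ≠ b →
    ∃ α ∈ B, f α ∈ Submodule.span ℂ {f a, f b}) ∧
  -- solvability
  (∀ a ∈ C \ B, ∀ b ∈ C \ B, ∀ c ∈ C \ B, a ≠ b → b ≠ c → a ≠ c →
    ∀ α ∈ B, ∀ β ∈ B, ∀ γ ∈ B,
      f α ∈ Submodule.span ℂ {f a, f b} →
      f β ∈ Submodule.span ℂ {f b, f c} →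
      f γ ∈ Submodule.span ℂ {f a, f c} →
      ((α = β ∧ β = γ) ∨
        Module.finrank ℂ (Submodule.span ℂ ({f α, f β, f γ} : Set (Module.Dual ℂ V))) ≤ 2))

/-- `c 1 ⊂ c 2 ⊂ ⋯ ⊂ c ℓ` is a composition series of length `ℓ` for the arrangement:
it starts with a single hyperplane, ends with the full arrangement, and each step is a
solvable extension. -/
def IsCompSeries {ι : Type*} [DecidableEq ι] [Fintype ι] (f : ι → Module.Dual ℂ V) (ℓ : ℕ)
    (c : ℕ → Finset ι) : Prop :=
  1 ≤ ℓ ∧ (c 1).card = 1 ∧ c ℓ = Finset.univ ∧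
  ∀ i, 1 ≤ i → i < ℓ → IsSolvableExtension f (c i) (c (i + 1))

/-- A central arrangement is hypersolvable if it admits a composition series. -/
def Hypersolvable {ι : Type*} [DecidableEq ι] [Fintype ι] (f : ι → Module.Dual ℂ V) : Prop :=
  ∃ (ℓ : ℕ) (c : ℕ → Finset ι), IsCompSeries f ℓ c

/-- The complement of the central arrangement in `ℂ^l` defined by the functionals `f`. -/
def arrComplement {l : ℕ} {ι : Type*} (f : ι → Module.Dual ℂ (Fin l → ℂ)) :
    Set (Fin l → ℂ) :=
  {x | ∀ i, f i x ≠ 0}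


section AuxRank
variable {W : Type*} [AddCommGroup W] [Module ℂ W] [FiniteDimensional ℂ W]

lemma arrCorank_add_finrank (X : Submodule ℂ W) :
    arrCorank X + Module.finrank ℂ X = Module.finrank ℂ W :=
  Submodule.finrank_quotient_add_finrank X

lemma arrCorank_anti {X Y : Submodule ℂ W} (h : X ≤ Y) : arrCorank Y ≤ arrCorank X := by
  have h1 := arrCorank_add_finrank X
  have h2 := arrCorank_add_finrank Y
  have h3 := Submodule.finrank_mono (R := ℂ) (M := W) h
  omega

lemma arrCorank_le_finrank (X : Submodule ℂ W) : arrCorank X ≤ Module.finrank ℂ W := by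
  have := arrCorank_add_finrank X; omega

lemma arrCorank_inf_ker (X : Submodule ℂ W) (g : Module.Dual ℂ W) :
    arrCorank (X ⊓ LinearMap.ker g) ≤ arrCorank X + 1 := by
  have h1 := arrCorank_add_finrank X
  have h2 := arrCorank_add_finrank (X ⊓ LinearMap.ker g)
  have h3 := Submodule.finrank_sup_add_finrank_inf_eq X (LinearMap.ker g)
  have h4 : Module.finrank ℂ ↥(X ⊔ LinearMap.ker g) ≤ Module.finrank ℂ W :=
    Submodule.finrank_le _
  have h5 := LinearMap.finrank_range_add_finrank_ker g
  have h6 : Module.finrank ℂ ↥(LinearMap.range g) ≤ 1 := by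
    simpa using Submodule.finrank_le (LinearMap.range g)
  omega

end AuxRank

/-- If `B ⊊ A` is a solvable extension of central arrangements, then
`r(B) ≤ r(A) ≤ r(B) + 1`. (The ambient arrangement `A` is indexed by all of `Fin n`,
and `B` by a proper subset of the indices.) -/
theorem solvableExtension_rank (l n : ℕ)
    (f : Fin n → Module.Dual ℂ (Fin l → ℂ))
    (hf0 : ∀ i, f i ≠ 0)
    (hprop : ∀ i j : Fin n, i ≠ j → ∀ a : ℂ, f i ≠ a • f j)
    (B : Finset (Fin n))
    (hBA : IsSolvableExtension f B Finset.univ) :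
    arrRankOn f B ≤ arrRank f ∧ arrRank f ≤ arrRankOn f B + 1 := by
  classical
  obtain ⟨hsub, -, hcompl, -⟩ := hBA
  have hbdd : ∀ C : Finset (Fin n), BddAbove (arrCorank '' arrLatticeOn f C) := by
    intro C
    refine ⟨Module.finrank ℂ (Fin l → ℂ), ?_⟩
    rintro x ⟨X, -, rfl⟩
    exact arrCorank_le_finrank X
  have hne : ∀ C : Finset (Fin n), (arrCorank '' arrLatticeOn f C).Nonempty := by
    intro C
    exact ⟨arrCorank (⊤ : Submodule ℂ (Fin l → ℂ)), ⟨⊤, ⟨∅, by simp, by simp⟩, rfl⟩⟩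
  constructor
  · refine csSup_le_csSup (hbdd _) (hne _) (Set.image_mono ?_)
    rintro X ⟨S, -, rfl⟩
    exact ⟨S, Finset.subset_univ _, rfl⟩
  · refine csSup_le (hne _) ?_
    rintro x ⟨X, ⟨S, -, rfl⟩, rfl⟩
    by_cases hSB : S ⊆ B
    · have h : arrCorank (S.inf fun i => LinearMap.ker (f i)) ≤ arrRankOn f B :=
        le_csSup (hbdd B) ⟨_, ⟨S, hSB, rfl⟩, rfl⟩
      omega
    · obtain ⟨a, haS, haB⟩ : ∃ a ∈ S, a ∉ B := by
        by_contra h; push_neg at h; exact hSB h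
      set g : Fin n → Fin n := fun b =>
        if h : ∃ α ∈ B, f α ∈ Submodule.span ℂ {f a, f b} then h.choose else a with hg
      set T : Finset (Fin n) := (S ∩ B) ∪ ((S \ B).erase a).image g with hT
      have hkey : ∀ b ∈ (S \ B).erase a,
          g b ∈ B ∧ f (g b) ∈ Submodule.span ℂ {f a, f b} := by
        intro b hb
        obtain ⟨hba, hbSB⟩ := Finset.mem_erase.mp hb
        rw [Finset.mem_sdiff] at hbSB
        have hex : ∃ α ∈ B, f α ∈ Submodule.span ℂ {f a, f b} := by
          obtain ⟨α, hα1, hα2⟩ := hcompl a (Finset.mem_sdiff.mpr ⟨Finset.mem_univ _, haB⟩)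
            b (Finset.mem_sdiff.mpr ⟨Finset.mem_univ _, hbSB.2⟩) (Ne.symm hba)
          exact ⟨α, hα1, hα2⟩
        rw [hg]
        simp only [dif_pos hex]
        exact ⟨hex.choose_spec.1, hex.choose_spec.2⟩
      have hTB : T ⊆ B := by
        intro y hy
        rw [hT] at hy
        rcases Finset.mem_union.mp hy with h | h
        · exact (Finset.mem_inter.mp h).2
        · obtain ⟨b, hb, rfl⟩ := Finset.mem_image.mp h
          exact (hkey b hb).1
      have hle : (T.inf fun i => LinearMap.ker (f i)) ⊓ LinearMap.ker (f a)
          ≤ S.inf fun i => LinearMap.ker (f i) := by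
        intro x hx
        obtain ⟨hxT, hxa⟩ := Submodule.mem_inf.mp hx
        rw [Submodule.mem_finsetInf] at hxT ⊢
        rw [LinearMap.mem_ker] at hxa
        intro i hiS
        rw [LinearMap.mem_ker]
        by_cases hiB : i ∈ B
        · have := hxT i (Finset.mem_union_left _ (Finset.mem_inter.mpr ⟨hiS, hiB⟩))
          rwa [LinearMap.mem_ker] at this
        · by_cases hia : i = a
          · subst hia; exact hxa
          · have hib : i ∈ (S \ B).erase a :=
              Finset.mem_erase.mpr ⟨hia, Finset.mem_sdiff.mpr ⟨hiS, hiB⟩⟩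
            have hgi := hkey i hib
            have hxgi : f (g i) x = 0 := by
              have := hxT (g i) (Finset.mem_union_right _ (Finset.mem_image_of_mem g hib))
              rwa [LinearMap.mem_ker] at this
            obtain ⟨c, d, hcd⟩ := Submodule.mem_span_pair.mp hgi.2
            have hd : d ≠ 0 := by
              intro hd0
              refine hprop (g i) a ?_ c ?_
              · intro h
                rw [h] at hgi
                exact haB hgi.1
              · rw [← hcd, hd0]; simp
            have heq : c * (f a x) + d * (f i x) = f (g i) x := by
              rw [← hcd]; simp
            rw [hxa, hxgi] at heq
            simp only [mul_zero, zero_add] at heq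
            exact (mul_eq_zero.mp heq).resolve_left hd
      have h1 : arrCorank (S.inf fun i => LinearMap.ker (f i))
          ≤ arrCorank ((T.inf fun i => LinearMap.ker (f i)) ⊓ LinearMap.ker (f a)) :=
        arrCorank_anti hle
      have h2 := arrCorank_inf_ker (T.inf fun i => LinearMap.ker (f i)) (f a)
      have h3 : arrCorank (T.inf fun i => LinearMap.ker (f i)) ≤ arrRankOn f B :=
        le_csSup (hbdd B) ⟨_, ⟨T, hTB, rfl⟩, rfl⟩
      omega
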